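/- The T-gate channel ρ ↦ TρT† with T = diag(1, e^{iπ/4}) equals (1/2)·I + (1/2 − 1/√2)·Z + (1/√2)·S as a linear map on 2×2 matrices, where I, Z, S are the channels of conjugation by the identity, Pauli Z, and phase gate S = diag(1,i) respectively. -/

import Mathlib

open Matrix

theorem stmt1 (ρ : Matrix (Fin 2) (Fin 2) ℂ) :
    let T : Matrix (Fin 2) (Fin 2) ℂ := !![1, 0; 0, Complex.exp ((Real.pi / 4 : ℝ) * Complex.I)]
    let Z : Matrix (Fin 2) (Fin 2) ℂ := !![1, 0; 0, -1]
    let S : Matrix (Fin 2) (Fin 2) ℂ := !![1, 0; 0, Complex.I]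
    T * ρ * Tᴴ =
      ((1 / 2 : ℝ) : ℂ) • ρ
        + (((1 / 2 - 1 / Real.sqrt 2 : ℝ)) : ℂ) • (Z * ρ * Zᴴ)
        + (((1 / Real.sqrt 2 : ℝ)) : ℂ) • (S * ρ * Sᴴ) := by
  intro T Z S
  have hs : ((Real.sqrt 2 : ℝ) : ℂ) ≠ 0 := by
    simpa using (by positivity : (Real.sqrt 2 : ℝ) ≠ 0)
  have h2 : ((Real.sqrt 2 : ℝ) : ℂ) * ((Real.sqrt 2 : ℝ) : ℂ) = 2 := by
    norm_cast
    exact Real.mul_self_sqrt (by norm_num)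
  have hi : Complex.I * Complex.I = -1 := Complex.I_mul_I
  have hT : Complex.exp ((Real.pi / 4 : ℝ) * Complex.I)
      = (1 / (Real.sqrt 2 : ℝ) : ℂ) * (1 + Complex.I) := by
    rw [Complex.exp_mul_I, ← Complex.ofReal_cos, ← Complex.ofReal_sin,
      Real.cos_pi_div_four, Real.sin_pi_div_four]
    push_cast
    field_simp
    linear_combination (1 + Complex.I) * h2
  have hT2 : (starRingEnd ℂ) (Complex.exp ((Real.pi / 4 : ℝ) * Complex.I))
      = (1 / (Real.sqrt 2 : ℝ) : ℂ) * (1 - Complex.I) := by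
    rw [hT]; simp [map_mul (starRingEnd ℂ), Complex.conj_I]
    ring
  ext i j
  fin_cases i <;> fin_cases j
  all_goals
    simp only [T, Z, S, hT2, hT, Matrix.mul_apply, Fin.sum_univ_two, Matrix.vecMul,
      dotProduct, conjTranspose_apply, Matrix.cons_val', Matrix.cons_val_zero,
      Matrix.cons_val_one, Matrix.head_cons, Matrix.head_fin_const, Matrix.empty_val',
      Matrix.cons_val_fin_one, Matrix.add_apply, Matrix.smul_apply, smul_eq_mul,
      _root_.map_one, map_neg, Complex.conj_I, map_zero, Matrix.of_apply,
      Fin.zero_eta, Fin.mk_one, Complex.star_def, map_mul, map_div₀, map_add, map_sub,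
      Complex.conj_ofReal]
    simp only [Complex.ofReal_div, Complex.ofReal_sub, Complex.ofReal_mul,
      Complex.ofReal_inv, Complex.ofReal_one, Complex.ofReal_ofNat]
  · field_simp; ring
  · field_simp; ring
  · field_simp; ring
  · field_simp
    linear_combination (-2 * ρ 1 1) * h2 +
      ((2 * ((Real.sqrt 2 : ℝ) : ℂ) - 2) * ρ 1 1) * hi
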